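/- (Spectral representation of the wave vector on the hypercube, n = 2.) Let d ≥ 2 be an integer, X = (ℤ/2ℤ)^d, and let w_0, …, w_d be nonnegative reals with Σ w_i = 1; define κ_j = C(d,j), ρ_j = Σ_{i=0}^d (w_i/κ_i) K_i(j), μ_j^± = ρ_j ± √−1·√(1−ρ_j²), the coin matrix C_{y,y'} = 2√((w_{|y|}/κ_{|y|})(w_{|y'|}/κ_{|y'|})) − δ_{y,y'}, and the wave vector by ψ_{y,x}(0) = δ_{x,0}√(w_{|y|}/κ_{|y|}) and ψ_{y,x}(t+1) = Σ_{y'∈X} C_{y,y'} ψ_{y',x⊕y}(t). Then for all t ∈ ℕ and x, y ∈ X: ψ_{y,x}(t) = (1/2^d)√(w_{|y|}/κ_{|y|})·{ 1 + (1/2)·Σ_{j: |ρ_j|<1} [ (μ_j^+)^t/(1−ρ_j μ_j^+) + (μ_j^−)^t/(1−ρ_j μ_j^−) ]·K_j(|x|) − (1/2)·Σ_{j: |ρ_j|<1} [ (μ_j^+)^{t+1}/(1−ρ_j μ_j^+) + (μ_j^−)^{t+1}/(1−ρ_j μ_j^−) ]·K_j(|x⊕y|) + Σ_{j>0: ρ_j=1}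 [(1−t)K_j(|x|) + t·K_j(|x⊕y|)] + Σ_{j>0: ρ_j=−1} (−1)^t·[(1−t)K_j(|x|) − t·K_j(|x⊕y|)] }, where the sums over j run over {0, 1, …, d} (respectively {1, …, d} in the last two sums). -/

import Mathlib

open scoped Classical

/-- The Krawtchouk polynomial value for `n = 2`:
`K_i(j) = Σ_{l=0}^{i} (-1)^l C(j,l) C(d-j, i-l)`. -/
noncomputable def kraw2 (d i j : ℕ) : ℝ :=
  ∑ l ∈ Finset.range (i + 1),
    (-1 : ℝ) ^ l * (j.choose l) * ((d - j).choose (i - l))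

/-- The coin matrix on the hypercube:
`C_{y,y'} = 2√((w_{|y|}/κ_{|y|})(w_{|y'|}/κ_{|y'|})) - δ_{y,y'}` with `κ_j = C(d,j)`. -/
noncomputable def coin2 (d : ℕ) (w : ℕ → ℝ) (y y' : Fin d → ZMod 2) : ℝ :=
  2 * Real.sqrt ((w (hammingNorm y) / (d.choose (hammingNorm y) : ℝ)) *
      (w (hammingNorm y') / (d.choose (hammingNorm y') : ℝ))) - if y = y' then 1 else 0

noncomputable def eps2 (v : ZMod 2) : ℝ := if v = 0 then 1 else -1

noncomputable def sgn2 {d : ℕ} (k x : Fin d → ZMod 2) : ℝ := ∏ i, eps2 (k i * x i)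

lemma eps2_add (a b : ZMod 2) : eps2 (a + b) = eps2 a * eps2 b := by
  have h2 : (1 : ZMod 2) + 1 = 0 := by decide
  rcases (by decide : ∀ v : ZMod 2, v = 0 ∨ v = 1) a with rfl | rfl <;>
    rcases (by decide : ∀ v : ZMod 2, v = 0 ∨ v = 1) b with rfl | rfl <;>
    simp [eps2, h2, (by decide : (1 : ZMod 2) ≠ 0)]

lemma eps2_zero : eps2 0 = 1 := by simp [eps2]

lemma sgn2_add_right {d : ℕ} (k z y : Fin d → ZMod 2) :
    sgn2 k (z + y) = sgn2 k z * sgn2 k y := by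
  rw [sgn2, sgn2, sgn2, ← Finset.prod_mul_distrib]
  refine Finset.prod_congr rfl fun i _ => ?_
  have : k i * (z + y) i = k i * z i + k i * y i := by
    simp [mul_add]
  rw [this, eps2_add]

lemma sgn2_symm {d : ℕ} (k x : Fin d → ZMod 2) : sgn2 k x = sgn2 x k := by
  unfold sgn2
  exact Finset.prod_congr rfl fun i _ => by rw [mul_comm]

lemma abs_sgn2 {d : ℕ} (k x : Fin d → ZMod 2) : |sgn2 k x| = 1 := by
  rw [sgn2, Finset.abs_prod]
  refine Finset.prod_eq_one fun i _ => ?_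
  unfold eps2; split <;> norm_num

lemma sgn2_zero_right {d : ℕ} (k : Fin d → ZMod 2) : sgn2 k 0 = 1 := by
  unfold sgn2
  refine Finset.prod_eq_one fun i _ => by simp [eps2_zero]

/-- The support of `k`. -/
noncomputable def supp2 {d : ℕ} (k : Fin d → ZMod 2) : Finset (Fin d) :=
  Finset.univ.filter (fun i => k i ≠ 0)

lemma hammingNorm_eq_supp2 {d : ℕ} (k : Fin d → ZMod 2) :
    hammingNorm k = (supp2 k).card := by
  unfold hammingNorm supp2; congr 1

noncomputable def indic2 {d : ℕ} (K : Finset (Fin d)) : Fin d → ZMod 2 :=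
  fun i => if i ∈ K then 1 else 0

lemma zmod2_cases : ∀ v : ZMod 2, v = 0 ∨ v = 1 := by decide

lemma supp2_indic2 {d : ℕ} (K : Finset (Fin d)) : supp2 (indic2 K) = K := by
  ext i
  by_cases h : i ∈ K <;> simp [supp2, indic2, h]

lemma indic2_supp2 {d : ℕ} (k : Fin d → ZMod 2) : indic2 (supp2 k) = k := by
  funext i
  simp only [indic2, supp2, Finset.mem_filter, Finset.mem_univ, true_and]
  rcases zmod2_cases (k i) with h | h <;> simp [h]

lemma sgn2_eq_pow {d : ℕ} (k x : Fin d → ZMod 2) :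
    sgn2 k x = (-1 : ℝ) ^ ((supp2 k ∩ supp2 x).card) := by
  have h : sgn2 k x = ∏ i, (if i ∈ supp2 k ∩ supp2 x then (-1:ℝ) else 1) := by
    refine Finset.prod_congr rfl fun i _ => ?_
    simp only [supp2, Finset.mem_inter, Finset.mem_filter, Finset.mem_univ, true_and]
    rcases zmod2_cases (k i) with h | h <;> rcases zmod2_cases (x i) with h' | h' <;>
      simp [eps2, h, h']
  rw [h, Fintype.prod_ite_mem, Finset.prod_const]

lemma fiber_card {d : ℕ} (j l : ℕ) (hl : l ≤ j) (A : Finset (Fin d)) :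
    ((Finset.powersetCard j (Finset.univ : Finset (Fin d))).filter
        (fun K => (K ∩ A).card = l)).card
      = A.card.choose l * (d - A.card).choose (j - l) := by
  have hcompl : (Finset.univ \ A : Finset (Fin d)).card = d - A.card := by
    rw [Finset.card_sdiff_of_subset (Finset.subset_univ A), Finset.card_univ, Fintype.card_fin]
  rw [← Finset.card_powersetCard l A, ← hcompl,
    ← Finset.card_powersetCard (j - l) (Finset.univ \ A), ← Finset.card_product]
  refine Finset.card_nbij' (fun K => (K ∩ A, K \ A)) (fun P => P.1 ∪ P.2) ?_ ?_ ?_ ?_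
  · intro K hK
    simp only [Finset.mem_coe, Finset.mem_filter, Finset.mem_powersetCard] at hK
    obtain ⟨⟨_, hcard⟩, hint⟩ := hK
    simp only [Finset.mem_coe, Finset.mem_product, Finset.mem_powersetCard]
    refine ⟨⟨Finset.inter_subset_right, hint⟩,
      Finset.sdiff_subset_sdiff (Finset.subset_univ K) le_rfl, ?_⟩
    have := Finset.card_inter_add_card_sdiff K A
    omega
  · intro P hP
    simp only [Finset.mem_coe, Finset.mem_product, Finset.mem_powersetCard] at hP
    obtain ⟨⟨h1, hc1⟩, h2, hc2⟩ := hP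
    have hA2 : ∀ i ∈ P.2, i ∉ A := fun i hi => (Finset.mem_sdiff.mp (h2 hi)).2
    have hdisj : Disjoint P.1 P.2 :=
      Finset.disjoint_left.mpr fun i hi1 hi2 => hA2 i hi2 (h1 hi1)
    have hPA : (P.1 ∪ P.2) ∩ A = P.1 := by
      ext i
      simp only [Finset.mem_inter, Finset.mem_union]
      constructor
      · rintro ⟨hi | hi, ha⟩
        · exact hi
        · exact absurd ha (hA2 i hi)
      · exact fun hi => ⟨Or.inl hi, h1 hi⟩
    simp only [Finset.mem_coe, Finset.mem_filter, Finset.mem_powersetCard]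
    refine ⟨⟨Finset.subset_univ _, ?_⟩, by rw [hPA]; exact hc1⟩
    rw [Finset.card_union_of_disjoint hdisj]
    omega
  · intro K hK
    simp only [Finset.mem_coe, Finset.mem_filter, Finset.mem_powersetCard] at hK
    ext i
    simp only [Finset.mem_union, Finset.mem_inter, Finset.mem_sdiff]
    tauto
  · intro P hP
    simp only [Finset.mem_coe, Finset.mem_product, Finset.mem_powersetCard] at hP
    obtain ⟨⟨h1, hc1⟩, h2, hc2⟩ := hP
    have hA2 : ∀ i ∈ P.2, i ∉ A := fun i hi => (Finset.mem_sdiff.mp (h2 hi)).2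
    have hPA : (P.1 ∪ P.2) ∩ A = P.1 := by
      ext i
      simp only [Finset.mem_inter, Finset.mem_union]
      constructor
      · rintro ⟨hi | hi, ha⟩
        · exact hi
        · exact absurd ha (hA2 i hi)
      · exact fun hi => ⟨Or.inl hi, h1 hi⟩
    have hPB : (P.1 ∪ P.2) \ A = P.2 := by
      ext i
      simp only [Finset.mem_sdiff, Finset.mem_union]
      constructor
      · rintro ⟨hi | hi, ha⟩
        · exact absurd (h1 hi) ha
        · exact hi
      · exact fun hi => ⟨Or.inr hi, hA2 i hi⟩
    show ((P.1 ∪ P.2) ∩ A, (P.1 ∪ P.2) \ A) = P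
    rw [hPA, hPB]

lemma charSum (d j : ℕ) (x : Fin d → ZMod 2) :
    ∑ k ∈ Finset.univ.filter (fun k : Fin d → ZMod 2 => hammingNorm k = j), sgn2 k x
      = kraw2 d j (hammingNorm x) := by
  have step1 : ∑ k ∈ Finset.univ.filter (fun k : Fin d → ZMod 2 => hammingNorm k = j),
        sgn2 k x
      = ∑ K ∈ Finset.powersetCard j (Finset.univ : Finset (Fin d)),
          (-1 : ℝ) ^ ((K ∩ supp2 x).card) := by
    refine Finset.sum_nbij' (fun k => supp2 k) (fun K => indic2 K) ?_ ?_ ?_ ?_ ?_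
    · intro k hk
      simp only [Finset.mem_filter, Finset.mem_univ, true_and] at hk
      simp only [Finset.mem_powersetCard]
      exact ⟨Finset.subset_univ _, by rw [← hammingNorm_eq_supp2, hk]⟩
    · intro K hK
      simp only [Finset.mem_filter, Finset.mem_univ, true_and]
      simp only [Finset.mem_powersetCard] at hK
      rw [hammingNorm_eq_supp2, supp2_indic2, hK.2]
    · exact fun k _ => indic2_supp2 k
    · exact fun K _ => supp2_indic2 K
    · exact fun k _ => sgn2_eq_pow k x
  rw [step1,
    ← Finset.sum_fiberwise_of_maps_to (g := fun K => (K ∩ supp2 x).card)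
      (t := Finset.range (j + 1))
      (fun K hK => by
        simp only [Finset.mem_powersetCard] at hK
        simp only [Finset.mem_range]
        have h1 : (K ∩ supp2 x).card ≤ K.card := Finset.card_le_card Finset.inter_subset_left
        omega)]
  rw [kraw2, hammingNorm_eq_supp2]
  refine Finset.sum_congr rfl fun l hl => ?_
  have hl' : l ≤ j := by simp only [Finset.mem_range] at hl; omega
  have : ∀ K ∈ (Finset.powersetCard j (Finset.univ : Finset (Fin d))).filter
      (fun K => (K ∩ supp2 x).card = l), (-1 : ℝ) ^ ((K ∩ supp2 x).card) = (-1 : ℝ) ^ l := by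
    intro K hK
    simp only [Finset.mem_filter] at hK
    rw [hK.2]
  rw [Finset.sum_congr rfl this, Finset.sum_const, fiber_card j l hl', nsmul_eq_mul]
  push_cast
  ring

lemma kraw2_zero_left (d a : ℕ) : kraw2 d 0 a = 1 := by
  simp [kraw2]

lemma kraw2_right_zero (d i : ℕ) : kraw2 d i 0 = (d.choose i : ℝ) := by
  rw [kraw2]
  rw [Finset.sum_eq_single 0]
  · simp
  · intro l _ hl
    have : (0 : ℕ).choose l = 0 := Nat.choose_eq_zero_of_lt (Nat.pos_of_ne_zero hl)
    simp [this]
  · intro h; simp at h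

lemma hammingNorm_le (d : ℕ) (k : Fin d → ZMod 2) : hammingNorm k ≤ d := by
  calc hammingNorm k ≤ (Finset.univ : Finset (Fin d)).card := Finset.card_filter_le _ _
  _ = d := by rw [Finset.card_univ, Fintype.card_fin]

lemma card_wt (d i : ℕ) :
    (((Finset.univ : Finset (Fin d → ZMod 2)).filter
      (fun k => hammingNorm k = i)).card : ℝ) = (d.choose i : ℝ) := by
  have h := charSum d i (0 : Fin d → ZMod 2)
  have h0 : hammingNorm (0 : Fin d → ZMod 2) = 0 := by simp [hammingNorm]
  rw [h0, kraw2_right_zero] at h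
  rw [← h]
  rw [Finset.sum_congr rfl (fun k _ => sgn2_zero_right k), Finset.sum_const, nsmul_eq_mul,
    mul_one]

lemma zmod2_sum (g : ZMod 2 → ℝ) : ∑ c : ZMod 2, g c = g 0 + g 1 := by
  rw [show (Finset.univ : Finset (ZMod 2)) = {0, 1} from by decide]
  rw [Finset.sum_pair (by decide)]

lemma sum_kraw2_all (d : ℕ) (x : Fin d → ZMod 2) :
    ∑ j ∈ Finset.range (d + 1), kraw2 d j (hammingNorm x)
      = if x = 0 then (2 : ℝ) ^ d else 0 := by
  rw [Finset.sum_congr rfl (fun j _ => (charSum d j x).symm)]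
  rw [Finset.sum_fiberwise_of_maps_to
    (fun k _ => Finset.mem_range.mpr (Nat.lt_succ_of_le (hammingNorm_le d k)))]
  have key : ∑ k : Fin d → ZMod 2, sgn2 k x
      = ∏ i, ∑ c : ZMod 2, eps2 (c * x i) := by
    rw [Fintype.prod_sum (fun i (c : ZMod 2) => eps2 (c * x i))]
    rfl
  rw [key]
  have hfac : ∀ i : Fin d, ∑ c : ZMod 2, eps2 (c * x i)
      = if x i = 0 then (2 : ℝ) else 0 := by
    intro i
    rw [zmod2_sum]
    rcases zmod2_cases (x i) with h | h <;>
      simp [h, eps2, (by decide : (1 : ZMod 2) ≠ 0)] <;> norm_num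
  rw [Finset.prod_congr rfl (fun i _ => hfac i)]
  by_cases hx : x = 0
  · simp [hx, Finset.prod_const]
  · have : ∃ i, x i ≠ 0 := by
      by_contra h
      push_neg at h
      exact hx (funext h)
    obtain ⟨i, hi⟩ := this
    rw [if_neg hx]
    exact Finset.prod_eq_zero (Finset.mem_univ i) (if_neg hi)

lemma avg2 (d : ℕ) (w : ℕ → ℝ) (ρ : ℕ → ℝ)
    (hρ : ∀ j, ρ j = ∑ i ∈ Finset.range (d + 1),
      w i / (d.choose i : ℝ) * kraw2 d i j)
    (j : ℕ) (z : Fin d → ZMod 2) :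
    ∑ y' : Fin d → ZMod 2, (w (hammingNorm y') / (d.choose (hammingNorm y') : ℝ)) *
        kraw2 d j (hammingNorm (z + y'))
      = ρ j * kraw2 d j (hammingNorm z) := by
  have hker : ∀ y' : Fin d → ZMod 2, kraw2 d j (hammingNorm (z + y'))
      = ∑ k ∈ Finset.univ.filter (fun k : Fin d → ZMod 2 => hammingNorm k = j),
          sgn2 k z * sgn2 k y' := by
    intro y'
    rw [← charSum d j (z + y')]
    exact Finset.sum_congr rfl fun k _ => sgn2_add_right k z y'
  calc ∑ y' : Fin d → ZMod 2, (w (hammingNorm y') / (d.choose (hammingNorm y') : ℝ)) *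
        kraw2 d j (hammingNorm (z + y'))
      = ∑ y' : Fin d → ZMod 2,
          ∑ k ∈ Finset.univ.filter (fun k : Fin d → ZMod 2 => hammingNorm k = j),
            sgn2 k z * ((w (hammingNorm y') / (d.choose (hammingNorm y') : ℝ)) *
              sgn2 k y') := by
        refine Finset.sum_congr rfl fun y' _ => ?_
        rw [hker y', Finset.mul_sum]
        exact Finset.sum_congr rfl fun k _ => by ring
    _ = ∑ k ∈ Finset.univ.filter (fun k : Fin d → ZMod 2 => hammingNorm k = j),
          sgn2 k z * ∑ y' : Fin d → ZMod 2,
            (w (hammingNorm y') / (d.choose (hammingNorm y') : ℝ)) * sgn2 k y' := by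
        rw [Finset.sum_comm]
        exact Finset.sum_congr rfl fun k _ => by rw [Finset.mul_sum]
    _ = ∑ k ∈ Finset.univ.filter (fun k : Fin d → ZMod 2 => hammingNorm k = j),
          sgn2 k z * ρ j := by
        refine Finset.sum_congr rfl fun k _ => ?_
        congr 1
        rw [← Finset.sum_fiberwise_of_maps_to
          (g := fun y' : Fin d → ZMod 2 => hammingNorm y')
          (t := Finset.range (d + 1))
          (fun y' _ => Finset.mem_range.mpr (Nat.lt_succ_of_le (hammingNorm_le d y')))]
        rw [hρ]
        rcases Finset.mem_filter.mp (by assumption : k ∈ Finset.univ.filter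
          (fun k : Fin d → ZMod 2 => hammingNorm k = j)) with ⟨_, hk⟩
        refine Finset.sum_congr rfl fun i _ => ?_
        have h1 : ∀ y' ∈ Finset.univ.filter
            (fun y' : Fin d → ZMod 2 => hammingNorm y' = i),
            (w (hammingNorm y') / (d.choose (hammingNorm y') : ℝ)) * sgn2 k y'
              = (w i / (d.choose i : ℝ)) * sgn2 y' k := by
          intro y' hy'
          rcases Finset.mem_filter.mp hy' with ⟨_, hy⟩
          rw [hy, sgn2_symm]
        rw [Finset.sum_congr rfl h1, ← Finset.mul_sum, charSum d i k, hk]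
    _ = ρ j * kraw2 d j (hammingNorm z) := by
        rw [← Finset.sum_mul, charSum d j z, mul_comm]

lemma kraw2_abs_le (d i j : ℕ) (hj : j ≤ d) : |kraw2 d i j| ≤ (d.choose i : ℝ) := by
  obtain ⟨K, -, hK⟩ := Finset.exists_subset_card_eq (s := (Finset.univ : Finset (Fin d))) (n := j)
    (by rw [Finset.card_univ, Fintype.card_fin]; exact hj)
  have hx : hammingNorm (indic2 K) = j := by
    rw [hammingNorm_eq_supp2, supp2_indic2, hK]
  rw [← hx, ← charSum d i (indic2 K)]
  calc |∑ k ∈ Finset.univ.filter (fun k : Fin d → ZMod 2 => hammingNorm k = i),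
        sgn2 k (indic2 K)|
      ≤ ∑ k ∈ Finset.univ.filter (fun k : Fin d → ZMod 2 => hammingNorm k = i),
          |sgn2 k (indic2 K)| := Finset.abs_sum_le_sum_abs _ _
    _ = ∑ k ∈ Finset.univ.filter (fun k : Fin d → ZMod 2 => hammingNorm k = i),
          (1 : ℝ) := Finset.sum_congr rfl fun k _ => abs_sgn2 k _
    _ = (d.choose i : ℝ) := by rw [Finset.sum_const, nsmul_eq_mul, mul_one, card_wt]

lemma rho_zero (d : ℕ) (w : ℕ → ℝ)
    (hsum : ∑ i ∈ Finset.range (d + 1), w i = 1)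
    (ρ : ℕ → ℝ)
    (hρ : ∀ j, ρ j = ∑ i ∈ Finset.range (d + 1),
      w i / (d.choose i : ℝ) * kraw2 d i j) :
    ρ 0 = 1 := by
  rw [hρ, ← hsum]
  refine Finset.sum_congr rfl fun i hi => ?_
  rw [kraw2_right_zero]
  have : (d.choose i : ℝ) ≠ 0 := by
    have := Nat.choose_pos (Nat.lt_succ_iff.mp (Finset.mem_range.mp hi))
    positivity
  field_simp

lemma rho_abs_le (d : ℕ) (w : ℕ → ℝ) (hw : ∀ i ∈ Finset.range (d + 1), 0 ≤ w i)
    (hsum : ∑ i ∈ Finset.range (d + 1), w i = 1)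
    (ρ : ℕ → ℝ)
    (hρ : ∀ j, ρ j = ∑ i ∈ Finset.range (d + 1),
      w i / (d.choose i : ℝ) * kraw2 d i j)
    (j : ℕ) (hj : j ≤ d) : |ρ j| ≤ 1 := by
  rw [hρ, ← hsum]
  calc |∑ i ∈ Finset.range (d + 1), w i / (d.choose i : ℝ) * kraw2 d i j|
      ≤ ∑ i ∈ Finset.range (d + 1), |w i / (d.choose i : ℝ) * kraw2 d i j| :=
        Finset.abs_sum_le_sum_abs _ _
    _ ≤ ∑ i ∈ Finset.range (d + 1), w i := by
        refine Finset.sum_le_sum fun i hi => ?_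
        have hwi := hw i hi
        have hci : (0 : ℝ) < (d.choose i : ℝ) := by
          exact_mod_cast Nat.choose_pos (Nat.lt_succ_iff.mp (Finset.mem_range.mp hi))
        rw [abs_mul, abs_div, abs_of_nonneg hwi, abs_of_pos hci]
        calc w i / (d.choose i : ℝ) * |kraw2 d i j|
            ≤ w i / (d.choose i : ℝ) * (d.choose i : ℝ) := by
              exact mul_le_mul_of_nonneg_left (kraw2_abs_le d i j hj) (by positivity)
          _ = w i := by field_simp

lemma sqrtC_sq (r : ℝ) (hr : |r| < 1) :
    ((Real.sqrt (1 - r ^ 2) : ℝ) : ℂ) ^ 2 = 1 - (r : ℂ) ^ 2 := by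
  have h1 : (0 : ℝ) ≤ 1 - r ^ 2 := by nlinarith [abs_lt.mp hr]
  rw [← Complex.ofReal_pow, Real.sq_sqrt h1]
  push_cast
  ring

lemma mu_sq (r : ℝ) (hr : |r| < 1) (p : ℂ)
    (hp : p = (r : ℂ) + Complex.I * ((Real.sqrt (1 - r ^ 2) : ℝ) : ℂ)) :
    p ^ 2 = 2 * (r : ℂ) * p - 1 := by
  subst hp
  linear_combination ((Real.sqrt (1 - r ^ 2) : ℝ) : ℂ) ^ 2 * Complex.I_sq - sqrtC_sq r hr

lemma mu_sq' (r : ℝ) (hr : |r| < 1) (m : ℂ)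
    (hm : m = (r : ℂ) - Complex.I * ((Real.sqrt (1 - r ^ 2) : ℝ) : ℂ)) :
    m ^ 2 = 2 * (r : ℂ) * m - 1 := by
  subst hm
  linear_combination ((Real.sqrt (1 - r ^ 2) : ℝ) : ℂ) ^ 2 * Complex.I_sq - sqrtC_sq r hr

lemma mu_prod_denom (r : ℝ) (hr : |r| < 1) (p m : ℂ)
    (hp : p = (r : ℂ) + Complex.I * ((Real.sqrt (1 - r ^ 2) : ℝ) : ℂ))
    (hm : m = (r : ℂ) - Complex.I * ((Real.sqrt (1 - r ^ 2) : ℝ) : ℂ)) :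
    (1 - (r : ℂ) * p) * (1 - (r : ℂ) * m) = 1 - (r : ℂ) ^ 2 := by
  subst hp hm
  linear_combination (-(r:ℂ)^2 * ((Real.sqrt (1 - r ^ 2) : ℝ) : ℂ)^2) * Complex.I_sq
    + (r:ℂ)^2 * sqrtC_sq r hr

lemma one_sub_sq_ne (r : ℝ) (hr : |r| < 1) : (1 : ℂ) - (r : ℂ) ^ 2 ≠ 0 := by
  have h1 : (0 : ℝ) < 1 - r ^ 2 := by nlinarith [abs_lt.mp hr]
  have : ((1 - r ^ 2 : ℝ) : ℂ) ≠ 0 := by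
    exact_mod_cast Complex.ofReal_ne_zero.mpr (ne_of_gt h1)
  convert this using 1
  push_cast; ring

lemma denom_ne (r : ℝ) (hr : |r| < 1) (p m : ℂ)
    (hp : p = (r : ℂ) + Complex.I * ((Real.sqrt (1 - r ^ 2) : ℝ) : ℂ))
    (hm : m = (r : ℂ) - Complex.I * ((Real.sqrt (1 - r ^ 2) : ℝ) : ℂ)) :
    (1 - (r : ℂ) * p) ≠ 0 ∧ (1 - (r : ℂ) * m) ≠ 0 := by
  have h := mu_prod_denom r hr p m hp hm
  have h2 := one_sub_sq_ne r hr
  rw [← h] at h2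
  exact ⟨left_ne_zero_of_mul h2, right_ne_zero_of_mul h2⟩

lemma A_zero (r : ℝ) (hr : |r| < 1) (p m : ℂ)
    (hp : p = (r : ℂ) + Complex.I * ((Real.sqrt (1 - r ^ 2) : ℝ) : ℂ))
    (hm : m = (r : ℂ) - Complex.I * ((Real.sqrt (1 - r ^ 2) : ℝ) : ℂ)) :
    1 / (1 - (r : ℂ) * p) + 1 / (1 - (r : ℂ) * m) = 2 := by
  obtain ⟨h1, h2⟩ := denom_ne r hr p m hp hm
  rw [div_add_div _ _ h1 h2, mu_prod_denom r hr p m hp hm]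
  have hnum : (1 : ℂ) * (1 - (r : ℂ) * m) + (1 - (r : ℂ) * p) * 1
      = 2 * (1 - (r : ℂ) ^ 2) := by subst hp hm; ring
  rw [hnum, mul_div_assoc, div_self (one_sub_sq_ne r hr), mul_one]

lemma A_one (r : ℝ) (hr : |r| < 1) (p m : ℂ)
    (hp : p = (r : ℂ) + Complex.I * ((Real.sqrt (1 - r ^ 2) : ℝ) : ℂ))
    (hm : m = (r : ℂ) - Complex.I * ((Real.sqrt (1 - r ^ 2) : ℝ) : ℂ)) :
    p / (1 - (r : ℂ) * p) + m / (1 - (r : ℂ) * m) = 0 := by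
  obtain ⟨h1, h2⟩ := denom_ne r hr p m hp hm
  rw [div_add_div _ _ h1 h2, mu_prod_denom r hr p m hp hm]
  have hnum : p * (1 - (r : ℂ) * m) + (1 - (r : ℂ) * p) * m = 0 := by
    subst hp hm
    linear_combination (2*(r:ℂ) * ((Real.sqrt (1 - r ^ 2) : ℝ) : ℂ)^2) * Complex.I_sq
      - 2*(r:ℂ) * sqrtC_sq r hr
  rw [hnum, zero_div]

lemma A_rec (r : ℝ) (hr : |r| < 1) (p m : ℂ)
    (hp : p = (r : ℂ) + Complex.I * ((Real.sqrt (1 - r ^ 2) : ℝ) : ℂ))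
    (hm : m = (r : ℂ) - Complex.I * ((Real.sqrt (1 - r ^ 2) : ℝ) : ℂ)) (t : ℕ) :
    p ^ (t + 2) / (1 - (r : ℂ) * p) + m ^ (t + 2) / (1 - (r : ℂ) * m)
      = 2 * (r : ℂ) * (p ^ (t + 1) / (1 - (r : ℂ) * p) + m ^ (t + 1) / (1 - (r : ℂ) * m))
        - (p ^ t / (1 - (r : ℂ) * p) + m ^ t / (1 - (r : ℂ) * m)) := by
  have hp2 := mu_sq r hr p hp
  have hm2 := mu_sq' r hr m hm
  have e1 : p ^ (t + 2) = 2 * (r : ℂ) * p ^ (t + 1) - p ^ t := by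
    have : p ^ (t + 2) = p ^ t * p ^ 2 := by ring
    rw [this, hp2]; ring
  have e2 : m ^ (t + 2) = 2 * (r : ℂ) * m ^ (t + 1) - m ^ t := by
    have : m ^ (t + 2) = m ^ t * m ^ 2 := by ring
    rw [this, hm2]; ring
  rw [e1, e2]
  ring

noncomputable def Aco (ρ : ℕ → ℝ) (μp μm : ℕ → ℂ) (j t : ℕ) : ℂ :=
  μp j ^ t / (1 - (ρ j : ℂ) * μp j) + μm j ^ t / (1 - (ρ j : ℂ) * μm j)

noncomputable def Fv (d : ℕ) (ρ : ℕ → ℝ) (μp μm : ℕ → ℂ) (t : ℕ)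
    (x z : Fin d → ZMod 2) : ℂ :=
  1 +
    (1 / 2) * ∑ j ∈ (Finset.range (d + 1)).filter (fun j => |ρ j| < 1),
      Aco ρ μp μm j t * ((kraw2 d j (hammingNorm x) : ℝ) : ℂ) -
    (1 / 2) * ∑ j ∈ (Finset.range (d + 1)).filter (fun j => |ρ j| < 1),
      Aco ρ μp μm j (t + 1) * ((kraw2 d j (hammingNorm z) : ℝ) : ℂ) +
    ∑ j ∈ (Finset.Icc 1 d).filter (fun j => ρ j = 1),
      ((1 - (t : ℂ)) * ((kraw2 d j (hammingNorm x) : ℝ) : ℂ) +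
        (t : ℂ) * ((kraw2 d j (hammingNorm z) : ℝ) : ℂ)) +
    ∑ j ∈ (Finset.Icc 1 d).filter (fun j => ρ j = -1),
      (-1 : ℂ) ^ t * ((1 - (t : ℂ)) * ((kraw2 d j (hammingNorm x) : ℝ) : ℂ) -
        (t : ℂ) * ((kraw2 d j (hammingNorm z) : ℝ) : ℂ))

/-- Complex version of the averaging identity. -/
lemma avg2C (d : ℕ) (w : ℕ → ℝ) (ρ : ℕ → ℝ)
    (hρ : ∀ j, ρ j = ∑ i ∈ Finset.range (d + 1),
      w i / (d.choose i : ℝ) * kraw2 d i j)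
    (j : ℕ) (u : Fin d → ZMod 2) :
    ∑ y' : Fin d → ZMod 2,
        ((w (hammingNorm y') / (d.choose (hammingNorm y') : ℝ) : ℝ) : ℂ) *
          ((kraw2 d j (hammingNorm (u + y')) : ℝ) : ℂ)
      = ((ρ j : ℝ) : ℂ) * ((kraw2 d j (hammingNorm u) : ℝ) : ℂ) := by
  have h := avg2 d w ρ hρ j u
  calc ∑ y' : Fin d → ZMod 2,
        ((w (hammingNorm y') / (d.choose (hammingNorm y') : ℝ) : ℝ) : ℂ) *
          ((kraw2 d j (hammingNorm (u + y')) : ℝ) : ℂ)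
      = ((∑ y' : Fin d → ZMod 2,
          (w (hammingNorm y') / (d.choose (hammingNorm y') : ℝ)) *
            kraw2 d j (hammingNorm (u + y')) : ℝ) : ℂ) := by push_cast; rfl
    _ = _ := by rw [h]; push_cast; rfl

/-- Sum of the weights over all vertices is 1 (complex version). -/
lemma weight_sumC (d : ℕ) (w : ℕ → ℝ)
    (hsum : ∑ i ∈ Finset.range (d + 1), w i = 1) :
    ∑ y' : Fin d → ZMod 2,
      ((w (hammingNorm y') / (d.choose (hammingNorm y') : ℝ) : ℝ) : ℂ) = 1 := by
  have hreal : ∑ y' : Fin d → ZMod 2,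
      w (hammingNorm y') / (d.choose (hammingNorm y') : ℝ) = 1 := by
    rw [← Finset.sum_fiberwise_of_maps_to
      (g := fun y' : Fin d → ZMod 2 => hammingNorm y') (t := Finset.range (d + 1))
      (fun y' _ => Finset.mem_range.mpr (Nat.lt_succ_of_le (hammingNorm_le d y')))]
    rw [← hsum]
    refine Finset.sum_congr rfl fun i hi => ?_
    have h1 : ∀ y' ∈ Finset.univ.filter
        (fun y' : Fin d → ZMod 2 => hammingNorm y' = i),
        w (hammingNorm y') / (d.choose (hammingNorm y') : ℝ)
          = w i / (d.choose i : ℝ) := by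
      intro y' hy'
      rw [(Finset.mem_filter.mp hy').2]
    rw [Finset.sum_congr rfl h1, Finset.sum_const, nsmul_eq_mul, card_wt]
    have hci : (d.choose i : ℝ) ≠ 0 := by
      have := Nat.choose_pos (Nat.lt_succ_iff.mp (Finset.mem_range.mp hi))
      positivity
    field_simp
  calc ∑ y' : Fin d → ZMod 2,
      ((w (hammingNorm y') / (d.choose (hammingNorm y') : ℝ) : ℝ) : ℂ)
      = ((∑ y' : Fin d → ZMod 2,
          w (hammingNorm y') / (d.choose (hammingNorm y') : ℝ) : ℝ) : ℂ) := by
        push_cast; rfl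
    _ = 1 := by rw [hreal]; norm_num

/-- Weighted sum of a linear combination of Krawtchouk terms. -/
lemma wsumT (d : ℕ) (w : ℕ → ℝ) (ρ : ℕ → ℝ)
    (hρ : ∀ j, ρ j = ∑ i ∈ Finset.range (d + 1),
      w i / (d.choose i : ℝ) * kraw2 d i j)
    (T : Finset ℕ) (c : ℕ → ℂ) (u : Fin d → ZMod 2) :
    ∑ y' : Fin d → ZMod 2,
        ((w (hammingNorm y') / (d.choose (hammingNorm y') : ℝ) : ℝ) : ℂ) *
          (∑ j ∈ T, c j * ((kraw2 d j (hammingNorm (u + y')) : ℝ) : ℂ))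
      = ∑ j ∈ T, c j * (((ρ j : ℝ) : ℂ) * ((kraw2 d j (hammingNorm u) : ℝ) : ℂ)) := by
  calc ∑ y' : Fin d → ZMod 2,
        ((w (hammingNorm y') / (d.choose (hammingNorm y') : ℝ) : ℝ) : ℂ) *
          (∑ j ∈ T, c j * ((kraw2 d j (hammingNorm (u + y')) : ℝ) : ℂ))
      = ∑ j ∈ T, ∑ y' : Fin d → ZMod 2, c j *
          (((w (hammingNorm y') / (d.choose (hammingNorm y') : ℝ) : ℝ) : ℂ) *
            ((kraw2 d j (hammingNorm (u + y')) : ℝ) : ℂ)) := by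
        rw [Finset.sum_comm]
        refine Finset.sum_congr rfl fun y' _ => ?_
        rw [Finset.mul_sum]
        exact Finset.sum_congr rfl fun j _ => by ring
    _ = _ := by
        refine Finset.sum_congr rfl fun j _ => ?_
        rw [← Finset.mul_sum, avg2C d w ρ hρ j u]

lemma Fv_split (d : ℕ) (ρ : ℕ → ℝ) (μp μm : ℕ → ℂ) (t : ℕ) (x z : Fin d → ZMod 2) :
    Fv d ρ μp μm t x z
      = 1 + (1 / 2) * ∑ j ∈ (Finset.range (d + 1)).filter (fun j => |ρ j| < 1),
            Aco ρ μp μm j t * ((kraw2 d j (hammingNorm x) : ℝ) : ℂ)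
        - (1 / 2) * ∑ j ∈ (Finset.range (d + 1)).filter (fun j => |ρ j| < 1),
            Aco ρ μp μm j (t + 1) * ((kraw2 d j (hammingNorm z) : ℝ) : ℂ)
        + (1 - (t : ℂ)) * ∑ j ∈ (Finset.Icc 1 d).filter (fun j => ρ j = 1),
            ((kraw2 d j (hammingNorm x) : ℝ) : ℂ)
        + (t : ℂ) * ∑ j ∈ (Finset.Icc 1 d).filter (fun j => ρ j = 1),
            ((kraw2 d j (hammingNorm z) : ℝ) : ℂ)
        + (-1 : ℂ) ^ t * (1 - (t : ℂ)) * ∑ j ∈ (Finset.Icc 1 d).filter (fun j => ρ j = -1),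
            ((kraw2 d j (hammingNorm x) : ℝ) : ℂ)
        - (-1 : ℂ) ^ t * (t : ℂ) * ∑ j ∈ (Finset.Icc 1 d).filter (fun j => ρ j = -1),
            ((kraw2 d j (hammingNorm z) : ℝ) : ℂ) := by
  simp only [Fv]
  rw [Finset.sum_add_distrib, ← Finset.mul_sum, ← Finset.mul_sum]
  have hM : ∑ j ∈ (Finset.Icc 1 d).filter (fun j => ρ j = -1),
      (-1 : ℂ) ^ t * ((1 - (t : ℂ)) * ((kraw2 d j (hammingNorm x) : ℝ) : ℂ) -
        (t : ℂ) * ((kraw2 d j (hammingNorm z) : ℝ) : ℂ))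
      = ∑ j ∈ (Finset.Icc 1 d).filter (fun j => ρ j = -1),
          ((-1 : ℂ) ^ t * (1 - (t : ℂ)) * ((kraw2 d j (hammingNorm x) : ℝ) : ℂ) -
            (-1 : ℂ) ^ t * (t : ℂ) * ((kraw2 d j (hammingNorm z) : ℝ) : ℂ)) :=
    Finset.sum_congr rfl fun j _ => by ring
  rw [hM, Finset.sum_sub_distrib, ← Finset.mul_sum, ← Finset.mul_sum]
  ring

lemma wsum1 (d : ℕ) (w : ℕ → ℝ) (ρ : ℕ → ℝ)
    (hρ : ∀ j, ρ j = ∑ i ∈ Finset.range (d + 1),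
      w i / (d.choose i : ℝ) * kraw2 d i j)
    (T : Finset ℕ) (u : Fin d → ZMod 2) :
    ∑ y' : Fin d → ZMod 2,
        ((w (hammingNorm y') / (d.choose (hammingNorm y') : ℝ) : ℝ) : ℂ) *
          (∑ j ∈ T, ((kraw2 d j (hammingNorm (u + y')) : ℝ) : ℂ))
      = ∑ j ∈ T, (((ρ j : ℝ) : ℂ) * ((kraw2 d j (hammingNorm u) : ℝ) : ℂ)) := by
  have h := wsumT d w ρ hρ T (fun _ => 1) u
  simp only [one_mul] at h
  exact h

lemma step_lemma (d : ℕ) (w : ℕ → ℝ)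
    (hsum : ∑ i ∈ Finset.range (d + 1), w i = 1)
    (ρ : ℕ → ℝ)
    (hρ : ∀ j, ρ j = ∑ i ∈ Finset.range (d + 1),
      w i / (d.choose i : ℝ) * kraw2 d i j)
    (μp μm : ℕ → ℂ)
    (hμp : ∀ j, μp j = (ρ j : ℂ) + Complex.I * (Real.sqrt (1 - ρ j ^ 2) : ℝ))
    (hμm : ∀ j, μm j = (ρ j : ℂ) - Complex.I * (Real.sqrt (1 - ρ j ^ 2) : ℝ))
    (t : ℕ) (u v : Fin d → ZMod 2) :
    2 * (∑ y' : Fin d → ZMod 2,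
        ((w (hammingNorm y') / (d.choose (hammingNorm y') : ℝ) : ℝ) : ℂ) *
          Fv d ρ μp μm t u (u + y'))
      - Fv d ρ μp μm t u v = Fv d ρ μp μm (t + 1) v u := by
  set S := (Finset.range (d + 1)).filter (fun j => |ρ j| < 1) with hS
  set P := (Finset.Icc 1 d).filter (fun j => ρ j = 1) with hP
  set M := (Finset.Icc 1 d).filter (fun j => ρ j = -1) with hMdef
  set L : ℕ → (Fin d → ZMod 2) → ℂ :=
    fun j z => ((kraw2 d j (hammingNorm z) : ℝ) : ℂ) with hL
  set aC : (Fin d → ZMod 2) → ℂ :=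
    fun y' => ((w (hammingNorm y') / (d.choose (hammingNorm y') : ℝ) : ℝ) : ℂ) with haC
  set C0 : ℂ := 1 + (1 / 2) * ∑ j ∈ S, Aco ρ μp μm j t * L j u
      + (1 - (t : ℂ)) * ∑ j ∈ P, L j u
      + (-1 : ℂ) ^ t * (1 - (t : ℂ)) * ∑ j ∈ M, L j u with hC0
  have hW : ∑ y' : Fin d → ZMod 2, aC y' * Fv d ρ μp μm t u (u + y')
      = C0 - (1 / 2) * ∑ j ∈ S, Aco ρ μp μm j (t + 1) * (((ρ j : ℝ) : ℂ) * L j u)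
          + (t : ℂ) * ∑ j ∈ P, (((ρ j : ℝ) : ℂ) * L j u)
          - (-1 : ℂ) ^ t * (t : ℂ) * ∑ j ∈ M, (((ρ j : ℝ) : ℂ) * L j u) := by
    have h1 : ∀ y' : Fin d → ZMod 2, aC y' * Fv d ρ μp μm t u (u + y')
        = C0 * aC y'
          - (1 / 2) * (aC y' * ∑ j ∈ S, Aco ρ μp μm j (t + 1) * L j (u + y'))
          + (t : ℂ) * (aC y' * ∑ j ∈ P, L j (u + y'))
          - (-1 : ℂ) ^ t * (t : ℂ) * (aC y' * ∑ j ∈ M, L j (u + y')) := by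
      intro y'
      rw [Fv_split]
      simp only [hC0, hL, hS, hP, hMdef]
      ring
    rw [Finset.sum_congr rfl fun y' _ => h1 y']
    simp only [Finset.sum_sub_distrib, Finset.sum_add_distrib]
    rw [← Finset.mul_sum, ← Finset.mul_sum, ← Finset.mul_sum, ← Finset.mul_sum]
    rw [weight_sumC d w hsum, mul_one,
      wsumT d w ρ hρ S (fun j => Aco ρ μp μm j (t + 1)) u,
      wsum1 d w ρ hρ P u, wsum1 d w ρ hρ M u]
  have hPρ : ∑ j ∈ P, (((ρ j : ℝ) : ℂ) * L j u) = ∑ j ∈ P, L j u := by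
    refine Finset.sum_congr rfl fun j hj => ?_
    rcases Finset.mem_filter.mp hj with ⟨-, hj1⟩
    rw [hj1]; norm_num
  have hMρ : ∑ j ∈ M, (((ρ j : ℝ) : ℂ) * L j u) = -∑ j ∈ M, L j u := by
    rw [← Finset.sum_neg_distrib]
    refine Finset.sum_congr rfl fun j hj => ?_
    rcases Finset.mem_filter.mp hj with ⟨-, hj1⟩
    rw [hj1]; push_cast; ring
  have hSrec : ∑ j ∈ S, Aco ρ μp μm j (t + 1 + 1) * L j u
      = 2 * ∑ j ∈ S, Aco ρ μp μm j (t + 1) * (((ρ j : ℝ) : ℂ) * L j u)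
        - ∑ j ∈ S, Aco ρ μp μm j t * L j u := by
    have h1 : ∀ j ∈ S, Aco ρ μp μm j (t + 1 + 1) * L j u
        = 2 * (Aco ρ μp μm j (t + 1) * (((ρ j : ℝ) : ℂ) * L j u))
          - Aco ρ μp μm j t * L j u := by
      intro j hj
      rcases Finset.mem_filter.mp hj with ⟨-, hj1⟩
      have h := A_rec (ρ j) hj1 (μp j) (μm j) (hμp j) (hμm j) t
      simp only [Aco]
      rw [show t + 1 + 1 = t + 2 from rfl, h]
      ring
    rw [Finset.sum_congr rfl h1, Finset.sum_sub_distrib, ← Finset.mul_sum]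
  rw [hW, Fv_split, Fv_split, hSrec]
  simp only [← hS, ← hP, ← hMdef, ← hL]
  rw [hPρ, hMρ]
  push_cast
  ring

lemma base_lemma (d : ℕ) (w : ℕ → ℝ) (hw : ∀ i ∈ Finset.range (d + 1), 0 ≤ w i)
    (hsum : ∑ i ∈ Finset.range (d + 1), w i = 1)
    (ρ : ℕ → ℝ)
    (hρ : ∀ j, ρ j = ∑ i ∈ Finset.range (d + 1),
      w i / (d.choose i : ℝ) * kraw2 d i j)
    (μp μm : ℕ → ℂ)
    (hμp : ∀ j, μp j = (ρ j : ℂ) + Complex.I * (Real.sqrt (1 - ρ j ^ 2) : ℝ))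
    (hμm : ∀ j, μm j = (ρ j : ℂ) - Complex.I * (Real.sqrt (1 - ρ j ^ 2) : ℝ))
    (x z : Fin d → ZMod 2) :
    Fv d ρ μp μm 0 x z = if x = 0 then (2 : ℂ) ^ d else 0 := by
  set S := (Finset.range (d + 1)).filter (fun j => |ρ j| < 1) with hS
  set P := (Finset.Icc 1 d).filter (fun j => ρ j = 1) with hP
  set M := (Finset.Icc 1 d).filter (fun j => ρ j = -1) with hMdef
  set L : ℕ → (Fin d → ZMod 2) → ℂ :=
    fun j z => ((kraw2 d j (hammingNorm z) : ℝ) : ℂ) with hL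
  have hA0 : ∀ j ∈ S, Aco ρ μp μm j 0 * L j x = 2 * L j x := by
    intro j hj
    rcases Finset.mem_filter.mp hj with ⟨-, hj1⟩
    have := A_zero (ρ j) hj1 (μp j) (μm j) (hμp j) (hμm j)
    simp only [Aco, pow_zero]
    rw [this]
  have hA1 : ∀ j ∈ S, Aco ρ μp μm j (0 + 1) * L j z = 0 := by
    intro j hj
    rcases Finset.mem_filter.mp hj with ⟨-, hj1⟩
    have := A_one (ρ j) hj1 (μp j) (μm j) (hμp j) (hμm j)
    simp only [Aco, zero_add, pow_one]
    rw [this, zero_mul]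
  rw [Fv_split]
  simp only [← hS, ← hP, ← hMdef, ← hL]
  rw [Finset.sum_congr rfl hA0, Finset.sum_congr rfl hA1, ← Finset.mul_sum, Finset.sum_const_zero]
  -- now: 1 + (1/2)*(2*ΣS) - (1/2)*0 + (1-0)*ΣP + 0*ΣPz + 1*(1-0)*ΣM - ... = ...
  have hgoal : (1 : ℂ) + ∑ j ∈ S, L j x + ∑ j ∈ P, L j x + ∑ j ∈ M, L j x
      = if x = 0 then (2 : ℂ) ^ d else 0 := by
    -- partition of range (d+1)
    have hrho0 := rho_zero d w hsum ρ hρ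
    have hS' : S = (Finset.Icc 1 d).filter (fun j => |ρ j| < 1) := by
      rw [hS]
      ext j
      simp only [Finset.mem_filter, Finset.mem_range, Finset.mem_Icc]
      constructor
      · rintro ⟨hj1, hj2⟩
        refine ⟨⟨?_, by omega⟩, hj2⟩
        rcases Nat.eq_zero_or_pos j with h0 | h0
        · subst h0; rw [hrho0] at hj2; norm_num at hj2
        · omega
      · rintro ⟨⟨hj1, hj2⟩, hj3⟩
        exact ⟨by omega, hj3⟩
    have hsplit1 : Finset.range (d + 1) = insert 0 (Finset.Icc 1 d) := by
      ext j
      simp only [Finset.mem_range, Finset.mem_insert, Finset.mem_Icc]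
      omega
    have h0notin : (0 : ℕ) ∉ Finset.Icc 1 d := by simp
    have hIcc : ∑ j ∈ Finset.Icc 1 d, L j x
        = ∑ j ∈ (Finset.Icc 1 d).filter (fun j => |ρ j| < 1), L j x
          + (∑ j ∈ P, L j x + ∑ j ∈ M, L j x) := by
      rw [← Finset.sum_filter_add_sum_filter_not (Finset.Icc 1 d) (fun j => |ρ j| < 1)]
      congr 1
      have hun : (Finset.Icc 1 d).filter (fun j => ¬|ρ j| < 1) = P ∪ M := by
        rw [hP, hMdef, ← Finset.filter_or]
        refine Finset.filter_congr fun j hj => ?_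
        rcases Finset.mem_Icc.mp hj with ⟨-, hjd⟩
        have habs := rho_abs_le d w hw hsum ρ hρ j hjd
        constructor
        · intro h
          have : |ρ j| = 1 := le_antisymm habs (not_lt.mp h)
          rcases abs_eq (by norm_num : (0:ℝ) ≤ 1) |>.mp this with h1 | h1
          · exact Or.inl h1
          · exact Or.inr h1
        · rintro (h | h) <;> rw [h] <;> norm_num
      have hdisj : Disjoint P M := by
        refine Finset.disjoint_left.mpr ?_
        intro a ha hb
        rw [hP, Finset.mem_filter] at ha
        rw [hMdef, Finset.mem_filter] at hb
        rw [ha.2] at hb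
        norm_num at hb
      rw [hun, Finset.sum_union hdisj]
    have hL0 : L 0 x = 1 := by
      simp only [hL, kraw2_zero_left]
      norm_num
    have hall : ∑ j ∈ Finset.range (d + 1), L j x
        = 1 + ∑ j ∈ S, L j x + ∑ j ∈ P, L j x + ∑ j ∈ M, L j x := by
      rw [hsplit1, Finset.sum_insert h0notin, hL0, hIcc, ← hS']
      ring
    rw [← hall]
    have hreal := sum_kraw2_all d x
    calc ∑ j ∈ Finset.range (d + 1), L j x
        = ((∑ j ∈ Finset.range (d + 1), kraw2 d j (hammingNorm x) : ℝ) : ℂ) := by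
          simp only [hL]; push_cast; rfl
      _ = _ := by
          rw [hreal]
          split <;> norm_num
  rw [← hgoal]
  push_cast
  ring

/-- Spectral representation of the wave vector on the hypercube,
Corollary 5.2: for the quantum walk on `H(d,2)` with coin built from weights
`w`, eigenvalues `ρ_j = Σ_i (w_i/κ_i)K_i(j)` and `μ_j^± = ρ_j ± √-1·√(1-ρ_j²)`,
the wave vector `ψ_{y,x}(t)` admits the stated spectral representation. -/
theorem spectral_representation_hypercube (d : ℕ) (hd : 2 ≤ d)
    (w : ℕ → ℝ) (hw : ∀ i ∈ Finset.range (d + 1), 0 ≤ w i)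
    (hsum : ∑ i ∈ Finset.range (d + 1), w i = 1)
    (ρ : ℕ → ℝ)
    (hρ : ∀ j, ρ j = ∑ i ∈ Finset.range (d + 1),
      w i / (d.choose i : ℝ) * kraw2 d i j)
    (μp μm : ℕ → ℂ)
    (hμp : ∀ j, μp j = (ρ j : ℂ) + Complex.I * (Real.sqrt (1 - ρ j ^ 2) : ℝ))
    (hμm : ∀ j, μm j = (ρ j : ℂ) - Complex.I * (Real.sqrt (1 - ρ j ^ 2) : ℝ))
    (ψ : ℕ → (Fin d → ZMod 2) → (Fin d → ZMod 2) → ℂ)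
    (hψ0 : ∀ (y x : Fin d → ZMod 2), ψ 0 y x =
      (if x = 0 then 1 else 0) *
        (Real.sqrt (w (hammingNorm y) / (d.choose (hammingNorm y) : ℝ)) : ℝ))
    (hψ : ∀ (t : ℕ) (y x : Fin d → ZMod 2), ψ (t + 1) y x =
      ∑ y', ((coin2 d w y y' : ℝ) : ℂ) * ψ t y' (x + y)) :
    ∀ (t : ℕ) (y x : Fin d → ZMod 2), ψ t y x =
      (1 / (2 : ℂ) ^ d) *
        (Real.sqrt (w (hammingNorm y) / (d.choose (hammingNorm y) : ℝ)) : ℝ) *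
        (1 +
          (1 / 2) * ∑ j ∈ (Finset.range (d + 1)).filter (fun j => |ρ j| < 1),
            ((μp j) ^ t / (1 - (ρ j : ℂ) * μp j) +
              (μm j) ^ t / (1 - (ρ j : ℂ) * μm j)) * (kraw2 d j (hammingNorm x) : ℝ) -
          (1 / 2) * ∑ j ∈ (Finset.range (d + 1)).filter (fun j => |ρ j| < 1),
            ((μp j) ^ (t + 1) / (1 - (ρ j : ℂ) * μp j) +
              (μm j) ^ (t + 1) / (1 - (ρ j : ℂ) * μm j)) *
              (kraw2 d j (hammingNorm (x + y)) : ℝ) +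
          ∑ j ∈ (Finset.Icc 1 d).filter (fun j => ρ j = 1),
            ((1 - (t : ℂ)) * (kraw2 d j (hammingNorm x) : ℝ) +
              (t : ℂ) * (kraw2 d j (hammingNorm (x + y)) : ℝ)) +
          ∑ j ∈ (Finset.Icc 1 d).filter (fun j => ρ j = -1),
            (-1 : ℂ) ^ t * ((1 - (t : ℂ)) * (kraw2 d j (hammingNorm x) : ℝ) -
              (t : ℂ) * (kraw2 d j (hammingNorm (x + y)) : ℝ))) := by
  suffices h : ∀ (t : ℕ) (y x : Fin d → ZMod 2), ψ t y x =
      (1 / (2 : ℂ) ^ d) *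
        ((Real.sqrt (w (hammingNorm y) / (d.choose (hammingNorm y) : ℝ)) : ℝ) : ℂ) *
        Fv d ρ μp μm t x (x + y) by
    intro t y x
    rw [h t y x]
    simp only [Fv, Aco]
  intro t
  induction t with
  | zero =>
    intro y x
    rw [hψ0 y x, base_lemma d w hw hsum ρ hρ μp μm hμp hμm x (x + y)]
    by_cases hx : x = 0
    · rw [if_pos hx, if_pos hx, one_mul]
      have h2 : ((2 : ℂ) ^ d) ≠ 0 := pow_ne_zero _ two_ne_zero
      generalize ((Real.sqrt (w (hammingNorm y) / (d.choose (hammingNorm y) : ℝ)) : ℝ) : ℂ) = s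
      field_simp
    · rw [if_neg hx, if_neg hx, zero_mul, mul_zero]
  | succ t ih =>
    intro y x
    rw [hψ t y x]
    have ha : ∀ y' : Fin d → ZMod 2,
        0 ≤ w (hammingNorm y') / (d.choose (hammingNorm y') : ℝ) := by
      intro y'
      refine div_nonneg (hw _ ?_) (by positivity)
      exact Finset.mem_range.mpr (Nat.lt_succ_of_le (hammingNorm_le d y'))
    have hyy0 : y + y = 0 := by
      funext i
      rcases zmod2_cases (y i) with h | h <;> simp [h]
      decide
    have hxyy : x + y + y = x := by rw [add_assoc, hyy0, add_zero]
    have hcoin : ∀ y' : Fin d → ZMod 2,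
        ((coin2 d w y y' : ℝ) : ℂ) * ψ t y' (x + y)
          = (1 / (2 : ℂ) ^ d) *
            ((2 * ((Real.sqrt (w (hammingNorm y) / (d.choose (hammingNorm y) : ℝ)) : ℝ) : ℂ) *
              ((w (hammingNorm y') / (d.choose (hammingNorm y') : ℝ) : ℝ) : ℂ)
              - (if y = y' then (1 : ℂ) else 0) *
                ((Real.sqrt (w (hammingNorm y') / (d.choose (hammingNorm y') : ℝ)) : ℝ) : ℂ))
              * Fv d ρ μp μm t (x + y) ((x + y) + y')) := by
      intro y'
      rw [ih y' (x + y)]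
      have hre : (coin2 d w y y' : ℝ) *
          Real.sqrt (w (hammingNorm y') / (d.choose (hammingNorm y') : ℝ))
          = 2 * Real.sqrt (w (hammingNorm y) / (d.choose (hammingNorm y) : ℝ)) *
              (w (hammingNorm y') / (d.choose (hammingNorm y') : ℝ))
            - (if y = y' then (1 : ℝ) else 0) *
              Real.sqrt (w (hammingNorm y') / (d.choose (hammingNorm y') : ℝ)) := by
        rw [coin2, Real.sqrt_mul (ha y)]
        rw [sub_mul]
        congr 1
        rw [mul_assoc, mul_assoc, Real.mul_self_sqrt (ha y')]
        ring
      have hreC := congrArg (Complex.ofReal) hre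
      push_cast [apply_ite Complex.ofReal] at hreC
      calc ((coin2 d w y y' : ℝ) : ℂ) *
            ((1 / (2 : ℂ) ^ d) *
              ((Real.sqrt (w (hammingNorm y') / (d.choose (hammingNorm y') : ℝ)) : ℝ) : ℂ) *
              Fv d ρ μp μm t (x + y) ((x + y) + y'))
          = (1 / (2 : ℂ) ^ d) *
              ((((coin2 d w y y' : ℝ) : ℂ) *
                ((Real.sqrt (w (hammingNorm y') / (d.choose (hammingNorm y') : ℝ)) : ℝ) : ℂ)) *
                Fv d ρ μp μm t (x + y) ((x + y) + y')) := by ring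
        _ = _ := by rw [hreC]; push_cast; ring
    rw [Finset.sum_congr rfl (fun y' _ => hcoin y'), ← Finset.mul_sum]
    have hsplitsum : ∑ y' : Fin d → ZMod 2,
        ((2 * ((Real.sqrt (w (hammingNorm y) / (d.choose (hammingNorm y) : ℝ)) : ℝ) : ℂ) *
            ((w (hammingNorm y') / (d.choose (hammingNorm y') : ℝ) : ℝ) : ℂ)
          - (if y = y' then (1 : ℂ) else 0) *
            ((Real.sqrt (w (hammingNorm y') / (d.choose (hammingNorm y') : ℝ)) : ℝ) : ℂ))
          * Fv d ρ μp μm t (x + y) ((x + y) + y'))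
        = 2 * ((Real.sqrt (w (hammingNorm y) / (d.choose (hammingNorm y) : ℝ)) : ℝ) : ℂ) *
            (∑ y' : Fin d → ZMod 2,
              ((w (hammingNorm y') / (d.choose (hammingNorm y') : ℝ) : ℝ) : ℂ) *
                Fv d ρ μp μm t (x + y) ((x + y) + y'))
          - ((Real.sqrt (w (hammingNorm y) / (d.choose (hammingNorm y) : ℝ)) : ℝ) : ℂ) *
              Fv d ρ μp μm t (x + y) x := by
      have h1 : ∀ y' : Fin d → ZMod 2,
          ((2 * ((Real.sqrt (w (hammingNorm y) / (d.choose (hammingNorm y) : ℝ)) : ℝ) : ℂ) *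
              ((w (hammingNorm y') / (d.choose (hammingNorm y') : ℝ) : ℝ) : ℂ)
            - (if y = y' then (1 : ℂ) else 0) *
              ((Real.sqrt (w (hammingNorm y') / (d.choose (hammingNorm y') : ℝ)) : ℝ) : ℂ))
            * Fv d ρ μp μm t (x + y) ((x + y) + y'))
          = 2 * ((Real.sqrt (w (hammingNorm y) / (d.choose (hammingNorm y) : ℝ)) : ℝ) : ℂ) *
              (((w (hammingNorm y') / (d.choose (hammingNorm y') : ℝ) : ℝ) : ℂ) *
                Fv d ρ μp μm t (x + y) ((x + y) + y'))
            - (if y = y' then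
                ((Real.sqrt (w (hammingNorm y') / (d.choose (hammingNorm y') : ℝ)) : ℝ) : ℂ) *
                  Fv d ρ μp μm t (x + y) ((x + y) + y')
              else 0) := by
        intro y'
        split <;> ring
      rw [Finset.sum_congr rfl (fun y' _ => h1 y'), Finset.sum_sub_distrib, ← Finset.mul_sum]
      congr 1
      rw [Finset.sum_ite_eq]
      rw [if_pos (Finset.mem_univ y), hxyy]
    rw [hsplitsum]
    have hstep := step_lemma d w hsum ρ hρ μp μm hμp hμm t (x + y) x
    rw [← hstep]
    ring
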